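/- Let P(Z) = A_0 Z^n + A_1 Z^{n-1} + ... + A_n be a polynomial of degree n ≥ 1 with d×d circulant matrix coefficients, where A_0 is invertible (P is regular). Then the equation P(Z) = O has at least one and at most n^d solutions Z among d×d circulant matrices with complex entries. -/
import Mathlib

/-- The `d × d` circulant matrix with first row `x`. -/
def circ {d : ℕ} (x : Fin d → ℂ) : Matrix (Fin d) (Fin d) ℂ :=
  Matrix.of fun i j => x (j - i)

namespace CircAux

open Matrix

variable {d : ℕ} {ω : ℂ}

noncomputable def conv [NeZero d] (x y : Fin d → ℂ) : Fin d → ℂ :=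
  fun u => ∑ s, x s * y (u - s)

noncomputable def delta [NeZero d] : Fin d → ℂ := fun t => if t = 0 then 1 else 0

noncomputable def convpow [NeZero d] (z : Fin d → ℂ) : ℕ → Fin d → ℂ
  | 0 => delta
  | m + 1 => conv z (convpow z m)

lemma circ_delta [NeZero d] : circ (delta (d := d)) = 1 := by
  ext i j
  simp only [circ, delta, Matrix.of_apply, Matrix.one_apply, sub_eq_zero]
  by_cases h : i = j <;> simp [h, eq_comm]

lemma circ_conv [NeZero d] (x y : Fin d → ℂ) : circ (conv x y) = circ x * circ y := by
  ext i j
  simp only [circ, conv, Matrix.of_apply, Matrix.mul_apply]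
  refine Fintype.sum_equiv (Equiv.addLeft i) _ _ fun s => ?_
  simp only [Equiv.coe_addLeft]
  rw [add_sub_cancel_left, sub_add_eq_sub_sub]

lemma circ_convpow [NeZero d] (z : Fin d → ℂ) (m : ℕ) :
    circ (convpow z m) = circ z ^ m := by
  induction m with
  | zero => simp [convpow, circ_delta]
  | succ m ih => rw [convpow, circ_conv, ih, pow_succ']

lemma circ_zero [NeZero d] : circ (0 : Fin d → ℂ) = 0 := by
  ext i j; simp [circ]

lemma circ_sum [NeZero d] {ι : Type*} (s : Finset ι) (f : ι → Fin d → ℂ) :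
    circ (∑ k ∈ s, f k) = ∑ k ∈ s, circ (f k) := by
  ext i j; simp [circ, Matrix.sum_apply]

lemma circ_injective [NeZero d] : Function.Injective (circ (d := d)) := by
  intro x y h
  funext k
  simpa [circ] using congrFun (congrFun h 0) k

noncomputable def ev (ω : ℂ) (j : Fin d) (x : Fin d → ℂ) : ℂ :=
  ∑ k, x k * ω ^ (j.val * k.val)

lemma pow_mod (hω : ω ^ d = 1) (m : ℕ) : ω ^ (m % d) = ω ^ m := by
  conv_rhs => rw [← Nat.mod_add_div m d]
  rw [pow_add, pow_mul, hω, one_pow, mul_one]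

lemma pow_val_add [NeZero d] (hω : ω ^ d = 1) (j a b : Fin d) :
    ω ^ (j.val * (a + b).val) = ω ^ (j.val * a.val) * ω ^ (j.val * b.val) := by
  have h : (a + b).val = (a.val + b.val) % d := Fin.val_add a b
  rw [h, mul_comm j.val, pow_mul, pow_mod hω, ← pow_mul, mul_comm _ j.val,
    mul_add, pow_add]

lemma ev_delta [NeZero d] (j : Fin d) : ev ω j delta = 1 := by
  unfold ev delta
  rw [Finset.sum_eq_single 0] <;> simp +contextual

lemma ev_conv [NeZero d] (hω : ω ^ d = 1) (j : Fin d) (x y : Fin d → ℂ) :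
    ev ω j (conv x y) = ev ω j x * ev ω j y := by
  unfold ev conv
  rw [Finset.sum_mul_sum]
  simp_rw [Finset.sum_mul]
  rw [Finset.sum_comm]
  refine Finset.sum_congr rfl fun s _ => ?_
  refine (Fintype.sum_equiv (Equiv.addLeft s) _ _ fun r => ?_).symm
  simp only [Equiv.coe_addLeft]
  rw [add_sub_cancel_left, pow_val_add hω]
  ring

lemma ev_convpow [NeZero d] (hω : ω ^ d = 1) (j : Fin d) (z : Fin d → ℂ) (m : ℕ) :
    ev ω j (convpow z m) = (ev ω j z) ^ m := by
  induction m with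
  | zero => simp [convpow, ev_delta]
  | succ m ih => rw [convpow, ev_conv hω, ih, pow_succ']

lemma ev_sum [NeZero d] {ι : Type*} (j : Fin d) (s : Finset ι) (f : ι → Fin d → ℂ) :
    ev ω j (∑ k ∈ s, f k) = ∑ k ∈ s, ev ω j (f k) := by
  unfold ev
  simp only [Finset.sum_apply, Finset.sum_mul]
  exact Finset.sum_comm

lemma ev_zero [NeZero d] (j : Fin d) : ev ω j (0 : Fin d → ℂ) = 0 := by
  simp [ev]

lemma circ_mulVec [NeZero d] (hω : ω ^ d = 1) (x : Fin d → ℂ) (j : Fin d) :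
    circ x *ᵥ (fun i => ω ^ (j.val * i.val)) = fun i => ev ω j x * ω ^ (j.val * i.val) := by
  funext i
  simp only [Matrix.mulVec, dotProduct, circ, Matrix.of_apply, ev]
  rw [Finset.sum_mul]
  refine (Fintype.sum_equiv (Equiv.addLeft i) _ _ fun s => ?_).symm
  simp only [Equiv.coe_addLeft]
  rw [add_sub_cancel_left, pow_val_add hω]
  ring

lemma ev_ne_zero_of_isUnit [NeZero d] (hω : ω ^ d = 1) (x : Fin d → ℂ)
    (hx : IsUnit (circ x)) (j : Fin d) : ev ω j x ≠ 0 := by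
  intro h0
  have hv : circ x *ᵥ (fun i => ω ^ (j.val * i.val)) = 0 := by
    rw [circ_mulVec hω]
    funext i
    simp [h0]
  have h2 := hx.unit.inv_mul
  rw [hx.unit_spec] at h2
  have h3 := congrArg
    (fun v => ((hx.unit⁻¹ : (Matrix (Fin d) (Fin d) ℂ)ˣ) : Matrix (Fin d) (Fin d) ℂ) *ᵥ v) hv
  simp only [Matrix.mulVec_mulVec, h2, Matrix.one_mulVec, Matrix.mulVec_zero] at h3
  have h4 := congrFun h3 0
  simp at h4

end CircAux

open CircAux Matrix Polynomial

/-- FTA for regular circulant polynomial equations: `P(Z) = O` with invertible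
leading coefficient has at least one and at most `n^d` circulant solutions. -/
theorem regular_poly_solutions (d n : ℕ) (hd : 2 ≤ d) (hn : 1 ≤ n)
    (A : ℕ → Fin d → ℂ) (hreg : IsUnit (circ (A 0))) :
    {Z : Matrix (Fin d) (Fin d) ℂ | (∃ z : Fin d → ℂ, Z = circ z) ∧
        ∑ k ∈ Finset.range (n + 1), circ (A k) * Z ^ (n - k) = 0}.Finite ∧
    {Z : Matrix (Fin d) (Fin d) ℂ | (∃ z : Fin d → ℂ, Z = circ z) ∧
        ∑ k ∈ Finset.range (n + 1), circ (A k) * Z ^ (n - k) = 0}.Nonempty ∧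
    {Z : Matrix (Fin d) (Fin d) ℂ | (∃ z : Fin d → ℂ, Z = circ z) ∧
        ∑ k ∈ Finset.range (n + 1), circ (A k) * Z ^ (n - k) = 0}.ncard ≤ n ^ d := by
  haveI : NeZero d := ⟨by omega⟩
  set ω : ℂ := Complex.exp (2 * Real.pi * Complex.I / d) with hωdef
  have hprim : IsPrimitiveRoot ω d := Complex.isPrimitiveRoot_exp d (by omega)
  have hω1 : ω ^ d = 1 := hprim.pow_eq_one
  set W : Matrix (Fin d) (Fin d) ℂ := Matrix.vandermonde (fun j : Fin d => ω ^ (j : ℕ)) with hWdef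
  have hWapply : ∀ j k : Fin d, W j k = ω ^ (j.val * k.val) := fun j k => by
    rw [hWdef, Matrix.vandermonde_apply, ← pow_mul]
  have hdet : W.det ≠ 0 := by
    rw [hWdef, Matrix.det_vandermonde]
    refine Finset.prod_ne_zero_iff.2 fun i _ => Finset.prod_ne_zero_iff.2 fun j hj => ?_
    rw [Finset.mem_Ioi] at hj
    refine sub_ne_zero_of_ne fun h => ?_
    have := hprim.pow_inj j.isLt i.isLt h
    omega
  have hWunit : IsUnit W.det := Ne.isUnit hdet
  have hWinv : ∀ z : Fin d → ℂ, W⁻¹ *ᵥ (W *ᵥ z) = z := fun z => by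
    rw [Matrix.mulVec_mulVec, Matrix.nonsing_inv_mul W hWunit, Matrix.one_mulVec]
  have hWinv' : ∀ f : Fin d → ℂ, W *ᵥ (W⁻¹ *ᵥ f) = f := fun f => by
    rw [Matrix.mulVec_mulVec, Matrix.mul_nonsing_inv W hWunit, Matrix.one_mulVec]
  have hevW : ∀ (j : Fin d) (z : Fin d → ℂ), ev ω j z = (W *ᵥ z) j := fun j z => by
    simp [Matrix.mulVec, dotProduct, hWapply, ev, mul_comm]
  -- the scalar polynomials
  set p : Fin d → Polynomial ℂ :=
    fun j => ∑ k ∈ Finset.range (n + 1), Polynomial.C (ev ω j (A k)) * Polynomial.X ^ (n - k)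
    with hpdef
  have hA0 : ∀ j, ev ω j (A 0) ≠ 0 := fun j => ev_ne_zero_of_isUnit hω1 _ hreg j
  have hcoeff : ∀ j, (p j).coeff n = ev ω j (A 0) := fun j => by
    rw [hpdef]
    rw [Polynomial.finset_sum_coeff, Finset.sum_eq_single 0]
    · simp
    · intro k hk hk0
      rw [Finset.mem_range] at hk
      simp only [Polynomial.coeff_C_mul, Polynomial.coeff_X_pow]
      rw [if_neg (by omega), mul_zero]
    · simp
  have hpne : ∀ j, p j ≠ 0 := fun j h => hA0 j (by rw [← hcoeff j, h, Polynomial.coeff_zero])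
  have hdeg : ∀ j, (p j).natDegree ≤ n := fun j => by
    rw [hpdef]
    refine Polynomial.natDegree_sum_le_of_forall_le _ _ fun k _ => ?_
    exact le_trans (Polynomial.natDegree_C_mul_X_pow_le _ _) (Nat.sub_le n k)
  have hdeg' : ∀ j, 0 < (p j).degree := fun j => by
    have h1 : ((n : ℕ) : WithBot ℕ) ≤ (p j).degree :=
      Polynomial.le_degree_of_ne_zero (by rw [hcoeff j]; exact hA0 j)
    refine lt_of_lt_of_le ?_ h1
    exact_mod_cast Nat.pos_of_ne_zero (by omega)
  have heval : ∀ (j : Fin d) (w : ℂ),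
      (p j).eval w = ∑ k ∈ Finset.range (n + 1), ev ω j (A k) * w ^ (n - k) := fun j w => by
    rw [hpdef]
    simp [Polynomial.eval_finset_sum]
  set t : Fin d → Finset ℂ := fun j => (p j).roots.toFinset with htdef
  have htmem : ∀ j w, w ∈ t j ↔ (p j).eval w = 0 := fun j w => by
    rw [htdef]
    simp [Multiset.mem_toFinset, Polynomial.mem_roots (hpne j), Polynomial.IsRoot]
  have htne : ∀ j, (t j).Nonempty := fun j => by
    obtain ⟨w, hw⟩ := Complex.exists_root (hdeg' j)
    exact ⟨w, (htmem j w).2 hw⟩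
  have htcard : ∀ j, (t j).card ≤ n := fun j =>
    le_trans (Multiset.toFinset_card_le _) (le_trans (Polynomial.card_roots' _) (hdeg j))
  -- key equivalence
  have hkey : ∀ z : Fin d → ℂ,
      (∑ k ∈ Finset.range (n + 1), circ (A k) * circ z ^ (n - k) = 0) ↔
        ∀ j, (W *ᵥ z) j ∈ t j := by
    intro z
    set m : Fin d → ℂ := ∑ k ∈ Finset.range (n + 1), conv (A k) (convpow z (n - k)) with hmdef
    have hcircm : circ m = ∑ k ∈ Finset.range (n + 1), circ (A k) * circ z ^ (n - k) := by
      rw [hmdef, circ_sum]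
      exact Finset.sum_congr rfl fun k _ => by rw [circ_conv, circ_convpow]
    have hevm : ∀ j, ev ω j m = (p j).eval ((W *ᵥ z) j) := fun j => by
      rw [hmdef, ev_sum, heval]
      exact Finset.sum_congr rfl fun k _ => by simp only [ev_conv hω1, ev_convpow hω1, hevW]
    constructor
    · intro h j
      have hm0 : m = 0 := circ_injective (by rw [hcircm, h, circ_zero])
      rw [htmem, ← hevm, hm0, ev_zero]
    · intro h
      have hWm : W *ᵥ m = 0 := by
        funext j
        show (W *ᵥ m) j = 0
        rw [← hevW j m, hevm]
        exact (htmem j _).1 (h j)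
      have hm0 : m = 0 := by
        have h5 := congrArg (fun v => W⁻¹ *ᵥ v) hWm
        simpa [hWinv m] using h5
      rw [← hcircm, hm0, circ_zero]
  -- describe the solution set as an image
  have hSeq : {Z : Matrix (Fin d) (Fin d) ℂ | (∃ z : Fin d → ℂ, Z = circ z) ∧
        ∑ k ∈ Finset.range (n + 1), circ (A k) * Z ^ (n - k) = 0}
      = (fun f => circ (W⁻¹ *ᵥ f)) '' ↑(Fintype.piFinset t) := by
    ext Z
    constructor
    · rintro ⟨⟨z, rfl⟩, heq⟩
      refine ⟨W *ᵥ z, ?_, by show circ (W⁻¹ *ᵥ (W *ᵥ z)) = circ z; rw [hWinv z]⟩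
      rw [Finset.mem_coe, Fintype.mem_piFinset]
      exact (hkey z).1 heq
    · rintro ⟨f, hf, rfl⟩
      refine ⟨⟨_, rfl⟩, ?_⟩
      refine (hkey _).2 fun j => ?_
      rw [hWinv' f]
      exact (Fintype.mem_piFinset.1 (Finset.mem_coe.1 hf)) j
  rw [hSeq]
  have hfinT : (↑(Fintype.piFinset t) : Set (Fin d → ℂ)).Finite := (Fintype.piFinset t).finite_toSet
  refine ⟨hfinT.image _, ?_, ?_⟩
  · refine Set.Nonempty.image _ ⟨fun j => (htne j).choose, ?_⟩
    rw [Finset.mem_coe, Fintype.mem_piFinset]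
    exact fun j => (htne j).choose_spec
  · calc ((fun f => circ (W⁻¹ *ᵥ f)) '' ↑(Fintype.piFinset t)).ncard
        ≤ (↑(Fintype.piFinset t) : Set (Fin d → ℂ)).ncard := Set.ncard_image_le hfinT
      _ = (Fintype.piFinset t).card := Set.ncard_coe_finset _
      _ = ∏ j, (t j).card := Fintype.card_piFinset t
      _ ≤ ∏ _j : Fin d, n := Finset.prod_le_prod' fun j _ => htcard j
      _ = n ^ d := by simp
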